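/- arXiv:2106.15742 — 7 statements merged into one kernel-verified Lean document; each statement's English description precedes it below -/
import Mathlib

section
/- Let V(x) = xᵀK⁻¹x/2 with K a positive definite symmetric d×d real matrix, and let b(x) = Ax for a real d×d matrix A. Then div(b e^{-V}) = 0 on ℝ^d if and only if A = JK⁻¹ for some antisymmetric matrix J. -/
open Matrix

/-- The divergence of a vector field `F : ℝ^d → ℝ^d`. -/
noncomputable def diverg {d : ℕ} (F : (Fin d → ℝ) → (Fin d → ℝ)) (x : Fin d → ℝ) : ℝ :=
  ∑ i : Fin d, fderiv ℝ F x (Pi.single i 1) i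

section Aux

variable {d : ℕ}

noncomputable def projC (i : Fin d) : (Fin d → ℝ) →L[ℝ] ℝ := ContinuousLinearMap.proj i

noncomputable def mvC (M : Matrix (Fin d) (Fin d) ℝ) : (Fin d → ℝ) →L[ℝ] (Fin d → ℝ) :=
  M.mulVecLin.toContinuousLinearMap

lemma hasFDerivAt_quad (M : Matrix (Fin d) (Fin d) ℝ) (x : Fin d → ℝ) :
    HasFDerivAt (fun x : Fin d → ℝ => x ⬝ᵥ (M *ᵥ x))
      (∑ i : Fin d, (x i • ((projC i).comp (mvC M)) + (M *ᵥ x) i • projC i)) x := by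
  have h : ∀ i : Fin d, HasFDerivAt (fun x : Fin d → ℝ => x i * (M *ᵥ x) i)
      (x i • ((projC i).comp (mvC M)) + (M *ᵥ x) i • projC i) x := by
    intro i
    have h1 : HasFDerivAt (fun x : Fin d → ℝ => x i) (projC i) x := hasFDerivAt_apply i x
    have h2 : HasFDerivAt (fun x : Fin d → ℝ => (M *ᵥ x) i)
        ((projC i).comp (mvC M)) x := ((projC i).comp (mvC M)).hasFDerivAt
    have := h1.mul h2
    exact this
  have := HasFDerivAt.fun_sum (fun i (_ : i ∈ Finset.univ) => h i)
  exact this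

lemma quad_deriv_apply (M : Matrix (Fin d) (Fin d) ℝ) (x v : Fin d → ℝ) :
    (∑ i : Fin d, (x i • ((projC i).comp (mvC M)) + (M *ᵥ x) i • projC i)) v
      = x ⬝ᵥ (M *ᵥ v) + (M *ᵥ x) ⬝ᵥ v := by
  simp [ContinuousLinearMap.sum_apply, projC, mvC, dotProduct, Finset.sum_add_distrib]

lemma diverg_eq (M : Matrix (Fin d) (Fin d) ℝ) (hM : Mᵀ = M)
    (A : Matrix (Fin d) (Fin d) ℝ) (x : Fin d → ℝ) :
    diverg (fun x => Real.exp (-(x ⬝ᵥ (M *ᵥ x)) / 2) • (A *ᵥ x)) x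
      = Real.exp (-(x ⬝ᵥ (M *ᵥ x)) / 2) * (A.trace - (M *ᵥ x) ⬝ᵥ (A *ᵥ x)) := by
  set Q := (∑ i : Fin d, (x i • ((projC i).comp (mvC M)) + (M *ᵥ x) i • projC i)) with hQ
  have hq : HasFDerivAt (fun x : Fin d → ℝ => x ⬝ᵥ (M *ᵥ x)) Q x := hasFDerivAt_quad M x
  have heq : (fun x : Fin d → ℝ => -(x ⬝ᵥ (M *ᵥ x)) / 2)
      = fun x : Fin d → ℝ => (-(2⁻¹:ℝ)) * (x ⬝ᵥ (M *ᵥ x)) := by funext y; ring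
  have hc0 : HasFDerivAt (fun x : Fin d → ℝ => -(x ⬝ᵥ (M *ᵥ x)) / 2) ((-(2⁻¹:ℝ)) • Q) x :=
    heq ▸ (hq.const_mul (-(2⁻¹:ℝ)))
  have hc := hc0.exp
  have hA : HasFDerivAt (fun x : Fin d → ℝ => A *ᵥ x) (mvC A) x := (mvC A).hasFDerivAt
  have hF := hc.smul hA
  rw [diverg, HasFDerivAt.fderiv (f := fun x => Real.exp (-(x ⬝ᵥ (M *ᵥ x)) / 2) • (A *ᵥ x)) hF]
  have hQi : ∀ i : Fin d, Q (Pi.single i 1) = 2 * (M *ᵥ x) i := by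
    intro i
    rw [quad_deriv_apply]
    have h1 : M *ᵥ Pi.single i 1 = fun j => M j i := by
      ext j; simp [Matrix.mulVec_single]
    have h2 : x ⬝ᵥ (M *ᵥ Pi.single i 1) = (M *ᵥ x) i := by
      rw [h1]
      have : ∀ j, M j i = Mᵀ i j := fun j => rfl
      simp only [dotProduct, Matrix.mulVec, this, hM]
      simp [dotProduct, mul_comm]
    rw [h2, dotProduct_single]
    ring
  have key : ∀ i : Fin d,
      (Real.exp (-(x ⬝ᵥ (M *ᵥ x)) / 2) • mvC A +
        (Real.exp (-(x ⬝ᵥ (M *ᵥ x)) / 2) • ((-(2⁻¹:ℝ)) • Q)).smulRight (A *ᵥ x)) (Pi.single i 1) i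
      = Real.exp (-(x ⬝ᵥ (M *ᵥ x)) / 2) * (A i i - (M *ᵥ x) i * (A *ᵥ x) i) := by
    intro i
    simp only [ContinuousLinearMap.add_apply, ContinuousLinearMap.smul_apply,
      ContinuousLinearMap.smulRight_apply,
      hQi i, Pi.add_apply, Pi.smul_apply, smul_eq_mul]
    have : (mvC A) (Pi.single i 1) i = A i i := by
      show (A *ᵥ Pi.single i 1) i = A i i
      simp [Matrix.mulVec_single]
    rw [this]
    ring
  calc (∑ i : Fin d, _) = ∑ i : Fin d,
        Real.exp (-(x ⬝ᵥ (M *ᵥ x)) / 2) * (A i i - (M *ᵥ x) i * (A *ᵥ x) i) :=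
        Finset.sum_congr rfl (fun i _ => key i)
    _ = _ := by
        rw [← Finset.mul_sum, Matrix.trace, dotProduct]
        rw [Finset.sum_sub_distrib]
        simp [Matrix.diag, dotProduct]

lemma antisym_quad_zero (J : Matrix (Fin d) (Fin d) ℝ) (hJ : Jᵀ = -J) (y : Fin d → ℝ) :
    y ⬝ᵥ (J *ᵥ y) = 0 := by
  have h1 : y ⬝ᵥ (J *ᵥ y) = (y ᵥ* J) ⬝ᵥ y := Matrix.dotProduct_mulVec y J y
  have h2 : y ᵥ* J = -(J *ᵥ y) := by
    calc y ᵥ* J = y ᵥ* (-Jᵀ) := by rw [hJ, neg_neg]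
    _ = -(J *ᵥ y) := by rw [Matrix.vecMul_neg, Matrix.vecMul_transpose]
  have h3 : y ⬝ᵥ (J *ᵥ y) = (J *ᵥ y) ⬝ᵥ y := dotProduct_comm _ _
  rw [h2, neg_dotProduct, ← h3] at h1
  linarith

end Aux

/-- For `V(x) = xᵀK⁻¹x/2` with `K` symmetric positive definite and `b(x) = Ax`,
`div(b e^{-V}) = 0` on `ℝ^d` iff `A = J K⁻¹` for some antisymmetric `J`. -/
theorem divergence_free_iff_antisymmetric {d : ℕ}
    (K : Matrix (Fin d) (Fin d) ℝ) (hK : K.PosDef) (A : Matrix (Fin d) (Fin d) ℝ) :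
    (∀ x : Fin d → ℝ,
        diverg (fun x => Real.exp (-(x ⬝ᵥ (K⁻¹ *ᵥ x)) / 2) • (A *ᵥ x)) x = 0) ↔
      ∃ J : Matrix (Fin d) (Fin d) ℝ, Jᵀ = -J ∧ A = J * K⁻¹ := by
  have hKs : Kᵀ = K := by
    have := hK.isHermitian
    rw [Matrix.IsHermitian] at this
    simpa using this
  have hu : IsUnit K.det := isUnit_iff_ne_zero.mpr hK.det_pos.ne'
  have hinv : (K⁻¹)ᵀ = K⁻¹ := by rw [Matrix.transpose_nonsing_inv, hKs]
  have hKK : K * K⁻¹ = 1 := Matrix.mul_nonsing_inv K hu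
  have hKK' : K⁻¹ * K = 1 := Matrix.nonsing_inv_mul K hu
  have halg : (∀ x : Fin d → ℝ,
        diverg (fun x => Real.exp (-(x ⬝ᵥ (K⁻¹ *ᵥ x)) / 2) • (A *ᵥ x)) x = 0) ↔
      ∀ x : Fin d → ℝ, A.trace - (K⁻¹ *ᵥ x) ⬝ᵥ (A *ᵥ x) = 0 := by
    constructor
    · intro h x
      have := h x
      rw [diverg_eq K⁻¹ hinv A x] at this
      exact (mul_eq_zero.mp this).resolve_left (Real.exp_ne_zero _)
    · intro h x
      rw [diverg_eq K⁻¹ hinv A x, h x, mul_zero]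
  rw [halg]
  constructor
  · intro h
    have htr : A.trace = 0 := by have := h 0; simpa using this
    have hquad : ∀ x : Fin d → ℝ, x ⬝ᵥ ((K⁻¹ * A) *ᵥ x) = 0 := by
      intro x
      have hx := h x
      rw [htr, zero_sub, neg_eq_zero] at hx
      calc x ⬝ᵥ ((K⁻¹ * A) *ᵥ x) = x ⬝ᵥ (K⁻¹ *ᵥ (A *ᵥ x)) := by rw [Matrix.mulVec_mulVec]
      _ = (x ᵥ* K⁻¹) ⬝ᵥ (A *ᵥ x) := Matrix.dotProduct_mulVec _ _ _
      _ = (K⁻¹ *ᵥ x) ⬝ᵥ (A *ᵥ x) := by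
        conv_lhs => rw [← hinv]
        rw [Matrix.vecMul_transpose]
      _ = 0 := hx
    set N := K⁻¹ * A with hNdef
    have e : ∀ a b : Fin d, (Pi.single a 1 : Fin d → ℝ) ⬝ᵥ (N *ᵥ Pi.single b 1) = N a b := by
      intro a b
      simp [single_dotProduct, Matrix.mulVec_single]
    have hNa : Nᵀ = -N := by
      ext i j
      have hi := hquad (Pi.single i 1)
      have hj := hquad (Pi.single j 1)
      have hij := hquad (Pi.single i 1 + Pi.single j 1)
      rw [e i i] at hi
      rw [e j j] at hj
      have expand : (Pi.single i 1 + Pi.single j 1 : Fin d → ℝ) ⬝ᵥ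
          (N *ᵥ (Pi.single i 1 + Pi.single j 1)) = N i i + N i j + N j i + N j j := by
        rw [Matrix.mulVec_add, dotProduct_add, add_dotProduct,
          add_dotProduct, e, e, e, e]
        ring
      rw [expand] at hij
      simp only [Matrix.transpose_apply, Matrix.neg_apply]
      linarith
    have h1 : Aᵀ * K⁻¹ = -(K⁻¹ * A) := by
      have := hNa
      rw [hNdef, Matrix.transpose_mul, hinv] at this
      exact this
    have hAt : Aᵀ = -(K⁻¹ * A) * K := by
      calc Aᵀ = Aᵀ * (K⁻¹ * K) := by rw [hKK', mul_one]
      _ = (Aᵀ * K⁻¹) * K := by rw [mul_assoc]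
      _ = -(K⁻¹ * A) * K := by rw [h1]
    refine ⟨A * K, ?_, ?_⟩
    · calc (A * K)ᵀ = Kᵀ * Aᵀ := Matrix.transpose_mul _ _
      _ = K * (-(K⁻¹ * A) * K) := by rw [hKs, hAt]
      _ = -((K * K⁻¹) * (A * K)) := by noncomm_ring
      _ = -(A * K) := by rw [hKK, one_mul]
    · rw [mul_assoc, hKK, mul_one]
  · rintro ⟨J, hJ, rfl⟩ x
    have htr : (J * K⁻¹).trace = 0 := by
      have t1 : (J * K⁻¹).trace = -(J * K⁻¹).trace := by
        conv_lhs => rw [← Matrix.trace_transpose, Matrix.transpose_mul, hinv, hJ]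
        rw [Matrix.mul_neg, Matrix.trace_neg, Matrix.trace_mul_comm]
      linarith
    have hq : (K⁻¹ *ᵥ x) ⬝ᵥ ((J * K⁻¹) *ᵥ x) = 0 := by
      rw [← Matrix.mulVec_mulVec]
      exact antisym_quad_zero J hJ (K⁻¹ *ᵥ x)
    rw [htr, hq, sub_zero]
end

section
/- Let K be a symmetric positive definite d×d real matrix, D symmetric positive semidefinite, J antisymmetric, and C = (D+J)K⁻¹. If every eigenvalue of C has positive real part, then the only C-invariant subspace of ker(D) that is invariant under Cᵀ is the trivial subspace {0}. (Hypoellipticity of the associated Fokker-Planck equation.) -/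
open Matrix

lemma re_mulVec_aux {d : ℕ} (M : Matrix (Fin d) (Fin d) ℝ) (z : Fin d → ℂ) :
    (fun i => (((M.map Complex.ofReal) *ᵥ z) i).re) = M *ᵥ (fun i => (z i).re) := by
  funext i
  simp [mulVec, dotProduct, Complex.re_sum, Complex.mul_re]

lemma im_mulVec_aux {d : ℕ} (M : Matrix (Fin d) (Fin d) ℝ) (z : Fin d → ℂ) :
    (fun i => (((M.map Complex.ofReal) *ᵥ z) i).im) = M *ᵥ (fun i => (z i).im) := by
  funext i
  simp [mulVec, dotProduct, Complex.im_sum, Complex.mul_im]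


/-- Hypoellipticity: if `C = (D+J)K⁻¹` is positive stable (all complex eigenvalues have
positive real part), with `K` symmetric positive definite, `D` symmetric positive
semidefinite and `J` antisymmetric, then the only subspace of `ker D` invariant
under `Cᵀ` is the trivial subspace. -/
theorem hypoelliptic_of_positive_stable {d : ℕ}
    (K D J : Matrix (Fin d) (Fin d) ℝ) (hK : K.PosDef) (hD : D.PosSemidef)
    (hJ : Jᵀ = -J) (C : Matrix (Fin d) (Fin d) ℝ) (hC : C = (D + J) * K⁻¹)
    (hstable : ∀ μ ∈ spectrum ℂ (C.map (Complex.ofReal)), 0 < μ.re) :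
    ∀ W : Submodule ℝ (Fin d → ℝ),
      (∀ x ∈ W, D *ᵥ x = 0) → (∀ x ∈ W, Cᵀ *ᵥ x ∈ W) → W = ⊥ := by
  intro W hker hinv
  by_contra hW
  obtain ⟨w, hwW, hw0⟩ := (Submodule.ne_bot_iff W).mp hW
  -- basic matrix identities
  have hKdet : IsUnit K.det := isUnit_iff_ne_zero.mpr hK.det_pos.ne'
  have hKs : Kᵀ = K := by
    have := hK.isHermitian.eq
    rwa [conjTranspose_eq_transpose_of_trivial] at this
  have hDs : Dᵀ = D := by
    have := hD.isHermitian.eq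
    rwa [conjTranspose_eq_transpose_of_trivial] at this
  have hCK : C * K = D + J := by
    rw [hC, Matrix.mul_assoc, nonsing_inv_mul _ hKdet, Matrix.mul_one]
  have hCt : Cᵀ = K⁻¹ * (D - J) := by
    rw [hC, transpose_mul, transpose_nonsing_inv, hKs, transpose_add, hDs, hJ,
      ← sub_eq_add_neg]
  have hKCt : K * Cᵀ = D - J := by
    rw [hCt, ← Matrix.mul_assoc, mul_nonsing_inv _ hKdet, Matrix.one_mul]
  -- the complexification of W
  let W' : Submodule ℂ (Fin d → ℂ) :=
    { carrier := {z | (fun i => (z i).re) ∈ W ∧ (fun i => (z i).im) ∈ W}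
      add_mem' := by
        rintro a b ⟨ha1, ha2⟩ ⟨hb1, hb2⟩
        exact ⟨by simpa [Complex.add_re, Pi.add_def] using W.add_mem ha1 hb1,
               by simpa [Complex.add_im, Pi.add_def] using W.add_mem ha2 hb2⟩
      zero_mem' := ⟨W.zero_mem, W.zero_mem⟩
      smul_mem' := by
        rintro c z ⟨h1, h2⟩
        constructor
        · have : (fun i => ((c • z) i).re) =
              c.re • (fun i => (z i).re) - c.im • (fun i => (z i).im) := by
            funext i; simp [Complex.mul_re, mul_comm]
          rw [this]
          exact W.sub_mem (W.smul_mem _ h1) (W.smul_mem _ h2)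
        · have : (fun i => ((c • z) i).im) =
              c.re • (fun i => (z i).im) + c.im • (fun i => (z i).re) := by
            funext i; simp [Complex.mul_im, mul_comm]
          rw [this]
          exact W.add_mem (W.smul_mem _ h2) (W.smul_mem _ h1) }
  have hWmem : ∀ z : Fin d → ℂ, z ∈ W' ↔
      ((fun i => (z i).re) ∈ W ∧ (fun i => (z i).im) ∈ W) := fun z => Iff.rfl
  -- Cᵀ (complexified) preserves W'
  have hinv' : ∀ z ∈ W', ((Cᵀ).map Complex.ofReal).mulVecLin z ∈ W' := by
    rintro z ⟨h1, h2⟩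
    constructor
    · simpa [mulVecLin_apply, re_mulVec_aux] using hinv _ h1
    · simpa [mulVecLin_apply, im_mulVec_aux] using hinv _ h2
  let f : Module.End ℂ W' := ((Cᵀ).map Complex.ofReal).mulVecLin.restrict hinv'
  have : Nontrivial W' := by
    refine ⟨⟨(fun i => (w i : ℂ)), ?_, ?_⟩, 0, ?_⟩
    · exact hwW
    · exact W.zero_mem
    · intro h
      apply hw0
      have h' : (fun i => (w i : ℂ)) = 0 := congrArg Subtype.val h
      funext i
      have := congrFun h' i
      simp only [Pi.zero_apply] at this ⊢
      exact_mod_cast this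
  obtain ⟨ν, hν⟩ := Module.End.exists_eigenvalue f
  obtain ⟨z, hz⟩ := hν.exists_hasEigenvector
  set x : Fin d → ℂ := (z : Fin d → ℂ) with hxdef
  have hx0 : x ≠ 0 := by
    intro h
    exact hz.right (Subtype.ext h)
  have heig : ((Cᵀ).map Complex.ofReal) *ᵥ x = ν • x := by
    have := hz.apply_eq_smul
    have h2 := congrArg (Subtype.val) this
    simpa [f, LinearMap.restrict_apply, mulVecLin_apply] using h2
  -- ν is in the spectrum of the complexified C
  have hspec : ν ∈ spectrum ℂ (C.map Complex.ofReal) := by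
    rw [spectrum.mem_iff]
    intro hu
    rw [Matrix.isUnit_iff_isUnit_det] at hu
    have hdet : (ν • (1 : Matrix (Fin d) (Fin d) ℂ) - (Cᵀ).map Complex.ofReal).det = 0 := by
      rw [← Matrix.exists_mulVec_eq_zero_iff]
      exact ⟨x, hx0, by
        rw [sub_mulVec, smul_mulVec, one_mulVec, heig, sub_self]⟩
    have htr : (ν • (1 : Matrix (Fin d) (Fin d) ℂ) - (Cᵀ).map Complex.ofReal)ᵀ
        = ν • (1 : Matrix (Fin d) (Fin d) ℂ) - C.map Complex.ofReal := by
      rw [transpose_sub, transpose_smul, transpose_one, ← transpose_map, transpose_transpose]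
    have : (ν • (1 : Matrix (Fin d) (Fin d) ℂ) - C.map Complex.ofReal).det = 0 := by
      rw [← htr, Matrix.det_transpose]; exact hdet
    rw [Algebra.algebraMap_eq_smul_one] at hu
    rw [this] at hu
    exact one_ne_zero (isUnit_zero_iff.mp hu).symm
  have hα : 0 < ν.re := hstable ν hspec
  -- real and imaginary parts of the eigenvector
  set u : Fin d → ℝ := fun i => (x i).re with hudef
  set v : Fin d → ℝ := fun i => (x i).im with hvdef
  obtain ⟨huW, hvW⟩ := z.property
  have hu' : Cᵀ *ᵥ u = ν.re • u - ν.im • v := by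
    have h1 : (fun i => ((((Cᵀ).map Complex.ofReal) *ᵥ x) i).re) = fun i => ((ν • x) i).re :=
      funext fun i => congrArg Complex.re (congrFun heig i)
    rw [re_mulVec_aux] at h1
    rw [hudef, hvdef, h1]
    funext i
    simp [Complex.mul_re]
  have hv' : Cᵀ *ᵥ v = ν.im • u + ν.re • v := by
    have h1 : (fun i => ((((Cᵀ).map Complex.ofReal) *ᵥ x) i).im) = fun i => ((ν • x) i).im :=
      funext fun i => congrArg Complex.im (congrFun heig i)
    rw [im_mulVec_aux] at h1
    rw [hudef, hvdef, h1]
    funext i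
    simp [Complex.mul_im]
    ring
  -- quadratic form identity
  have key : ∀ p, p ∈ W → (Cᵀ *ᵥ p) ⬝ᵥ (K *ᵥ p) + p ⬝ᵥ (K *ᵥ (Cᵀ *ᵥ p)) = 0 := by
    intro p hp
    have h1 : (Cᵀ *ᵥ p) ⬝ᵥ (K *ᵥ p) = p ⬝ᵥ ((D + J) *ᵥ p) := by
      rw [← hCK, ← mulVec_mulVec, dotProduct_mulVec (v := p), ← mulVec_transpose]
    have h2 : p ⬝ᵥ (K *ᵥ (Cᵀ *ᵥ p)) = p ⬝ᵥ ((D - J) *ᵥ p) := by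
      rw [← hKCt, ← mulVec_mulVec]
    rw [h1, h2, add_mulVec, sub_mulVec, dotProduct_add, dotProduct_sub, hker p hp]
    simp
  have hsymm : v ⬝ᵥ (K *ᵥ u) = u ⬝ᵥ (K *ᵥ v) := by
    rw [dotProduct_mulVec (v := v), ← mulVec_transpose, hKs, dotProduct_comm]
  have equ := key u huW
  have eqv := key v hvW
  rw [hu'] at equ
  rw [hv'] at eqv
  simp only [sub_dotProduct, add_dotProduct, smul_dotProduct, mulVec_sub, mulVec_add,
    mulVec_smul, dotProduct_sub, dotProduct_add, dotProduct_smul, smul_eq_mul] at equ eqv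
  set a := u ⬝ᵥ (K *ᵥ u) with hadef
  set b := v ⬝ᵥ (K *ᵥ v) with hbdef
  set c := u ⬝ᵥ (K *ᵥ v) with hcdef
  rw [hsymm] at equ eqv
  -- equ : ν.re * a - ν.im * c + (ν.re * a - ν.im * c) = 0 (roughly)
  -- eqv : ν.im * c + ν.re * b + (ν.im * c + ν.re * b) = 0
  have hab : a + b = 0 := by
    have h := mul_pos hα (by nlinarith : (0:ℝ) < 1)
    nlinarith [equ, eqv, hα]
  have ha0 : 0 ≤ a := by
    have := hK.posSemidef.dotProduct_mulVec_nonneg u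
    simpa [star_trivial] using this
  have hb0 : 0 ≤ b := by
    have := hK.posSemidef.dotProduct_mulVec_nonneg v
    simpa [star_trivial] using this
  have huv : u ≠ 0 ∨ v ≠ 0 := by
    by_contra h
    push_neg at h
    apply hx0
    funext i
    have h1 := congrFun h.1 i
    have h2 := congrFun h.2 i
    exact Complex.ext (by simpa using h1) (by simpa using h2)
  rcases huv with h | h
  · have : 0 < a := by simpa [star_trivial] using hK.dotProduct_mulVec_pos h
    linarith
  · have : 0 < b := by simpa [star_trivial] using hK.dotProduct_mulVec_pos h
    linarith
end

section
/- Let D̃ be a symmetric positive semidefinite d×d real matrix. Then there exists an orthonormal basis ψ₁, ..., ψ_d of ℝ^d such that ⟨ψ_k, D̃ψ_k⟩ = Tr(D̃)/d for all k = 1, ..., d. -/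
open Matrix

private lemma equi_aux_eig_dot {d : ℕ} (M : Matrix (Fin d) (Fin d) ℝ) (hM : M.IsHermitian) (i j : Fin d) :
    ⇑(hM.eigenvectorBasis i) ⬝ᵥ ⇑(hM.eigenvectorBasis j) = if i = j then 1 else 0 := by
  have h := orthonormal_iff_ite.mp hM.eigenvectorBasis.orthonormal i j
  simpa [PiLp.inner_apply, RCLike.inner_apply, dotProduct, mul_comm] using h

private lemma equi_aux_sum_eig {d : ℕ} (M : Matrix (Fin d) (Fin d) ℝ) (hM : M.IsHermitian) :
    ∑ i, hM.eigenvalues i = M.trace := by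
  have h := hM.spectral_theorem
  have hu : (hM.eigenvectorUnitary : Matrix (Fin d) (Fin d) ℝ) *
      (star (hM.eigenvectorUnitary : Matrix (Fin d) (Fin d) ℝ)) = 1 :=
    Matrix.mem_unitaryGroup_iff.mp hM.eigenvectorUnitary.2
  have hu' := mul_eq_one_comm.mp hu
  have : M.trace = ((hM.eigenvectorUnitary : Matrix (Fin d) (Fin d) ℝ) *
        diagonal (RCLike.ofReal ∘ hM.eigenvalues) *
        (star (hM.eigenvectorUnitary : Matrix (Fin d) (Fin d) ℝ))).trace := by exact congrArg Matrix.trace h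
  rw [this, trace_mul_cycle, hu', one_mul, trace_diagonal]
  simp

private lemma equi_aux_exists_unit_avg {d : ℕ} (hd : d ≠ 0) (M : Matrix (Fin d) (Fin d) ℝ)
    (hM : M.IsHermitian) :
    ∃ v : Fin d → ℝ, v ⬝ᵥ v = 1 ∧ v ⬝ᵥ (M *ᵥ v) = M.trace / d := by
  set μ := hM.eigenvalues with hμ
  set t := M.trace / d with ht
  have hdpos : (0:ℝ) < d := by exact_mod_cast Nat.pos_of_ne_zero hd
  have hne : (Finset.univ : Finset (Fin d)).Nonempty :=
    ⟨⟨0, Nat.pos_of_ne_zero hd⟩, Finset.mem_univ _⟩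
  obtain ⟨i0, -, h0⟩ := Finset.exists_min_image Finset.univ μ hne
  obtain ⟨i1, -, h1⟩ := Finset.exists_max_image Finset.univ μ hne
  have htr : ∑ i, μ i = M.trace := equi_aux_sum_eig M hM
  have hlow : μ i0 ≤ t := by
    rw [ht, le_div_iff₀ hdpos]
    calc μ i0 * d = ∑ _i : Fin d, μ i0 := by
          simp [Finset.sum_const, mul_comm]
      _ ≤ ∑ i, μ i := Finset.sum_le_sum fun i _ => h0 i (Finset.mem_univ i)
      _ = M.trace := htr
  have hhigh : t ≤ μ i1 := by
    rw [ht, div_le_iff₀ hdpos]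
    calc M.trace = ∑ i, μ i := htr.symm
      _ ≤ ∑ _i : Fin d, μ i1 := Finset.sum_le_sum fun i _ => h1 i (Finset.mem_univ i)
      _ = μ i1 * d := by simp [Finset.sum_const, mul_comm]
  by_cases hc : μ i1 ≤ μ i0
  · -- all between: t = μ i0
    have : t = μ i0 := le_antisymm (hhigh.trans hc) hlow
    refine ⟨⇑(hM.eigenvectorBasis i0), ?_, ?_⟩
    · simpa using equi_aux_eig_dot M hM i0 i0
    · rw [hM.mulVec_eigenvectorBasis]
      have h00 : ⇑(hM.eigenvectorBasis i0) ⬝ᵥ ⇑(hM.eigenvectorBasis i0) = 1 := by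
        simpa using equi_aux_eig_dot M hM i0 i0
      rw [dotProduct_smul, h00, smul_eq_mul, mul_one]
      exact ‹t = μ i0›.symm
  · push_neg at hc
    have hdiffpos : 0 < μ i1 - μ i0 := by linarith
    have hij : i0 ≠ i1 := fun h => by rw [h] at hc; exact lt_irrefl _ hc
    set s := (t - μ i0) / (μ i1 - μ i0) with hs
    have hs0 : 0 ≤ s := div_nonneg (by linarith) (by linarith)
    have hs1 : s ≤ 1 := by
      rw [hs, div_le_one hdiffpos]; linarith
    have hsmul : s * (μ i1 - μ i0) = t - μ i0 := by
      rw [hs, div_mul_cancel₀ _ hdiffpos.ne']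
    set a := Real.sqrt (1 - s) with ha
    set c := Real.sqrt s with hc'
    have ha2 : a * a = 1 - s := Real.mul_self_sqrt (by linarith)
    have hc2 : c * c = s := Real.mul_self_sqrt hs0
    set u0 : Fin d → ℝ := ⇑(hM.eigenvectorBasis i0) with hu0
    set u1 : Fin d → ℝ := ⇑(hM.eigenvectorBasis i1) with hu1
    have d00 : u0 ⬝ᵥ u0 = 1 := by simpa using equi_aux_eig_dot M hM i0 i0
    have d01 : u0 ⬝ᵥ u1 = 0 := by simpa [hij] using equi_aux_eig_dot M hM i0 i1
    have d10 : u1 ⬝ᵥ u0 = 0 := by simpa [hij.symm] using equi_aux_eig_dot M hM i1 i0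
    have d11 : u1 ⬝ᵥ u1 = 1 := by simpa using equi_aux_eig_dot M hM i1 i1
    have hm0 : M *ᵥ u0 = μ i0 • u0 := hM.mulVec_eigenvectorBasis i0
    have hm1 : M *ᵥ u1 = μ i1 • u1 := hM.mulVec_eigenvectorBasis i1
    refine ⟨a • u0 + c • u1, ?_, ?_⟩
    · have ha2' : a ^ 2 = 1 - s := by rw [sq]; exact ha2
      have hc2' : c ^ 2 = s := by rw [sq]; exact hc2
      simp only [dotProduct_add, add_dotProduct, dotProduct_smul, smul_dotProduct,
        smul_eq_mul, d00, d01, d10, d11]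
      ring_nf
      rw [ha2', hc2']
      ring
    · rw [mulVec_add, mulVec_smul, mulVec_smul, hm0, hm1]
      have ha2' : a ^ 2 = 1 - s := by rw [sq]; exact ha2
      have hc2' : c ^ 2 = s := by rw [sq]; exact hc2
      have key : (1 - s) * μ i0 + s * μ i1 = t := by linarith [hsmul]
      have ht' : t = M.trace * (↑d : ℝ)⁻¹ := by rw [ht, div_eq_mul_inv]
      simp only [dotProduct_add, add_dotProduct, dotProduct_smul, smul_dotProduct,
        smul_eq_mul, d00, d01, d10, d11]
      ring_nf
      rw [ha2', hc2']
      linarith [key, ht']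
private lemma equi_aux_exists_orth_extend {d : ℕ} (v : Fin d → ℝ) (hv : v ⬝ᵥ v = 1) (k0 : Fin d) :
    ∃ Q : Matrix (Fin d) (Fin d) ℝ, Qᵀ * Q = 1 ∧ ∀ i, Q i k0 = v i := by
  have hcard : Module.finrank ℝ (EuclideanSpace ℝ (Fin d)) = Fintype.card (Fin d) := by
    simp [finrank_euclideanSpace]
  set w : Fin d → EuclideanSpace ℝ (Fin d) := fun _ => (WithLp.equiv 2 _).symm v with hw
  have horth : Orthonormal ℝ (({k0} : Set (Fin d)).restrict w) := by
    rw [orthonormal_iff_ite]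
    rintro ⟨i, hi⟩ ⟨j, hj⟩
    simp only [Set.mem_singleton_iff] at hi hj
    subst hi; subst hj
    simp only [Set.restrict_apply, if_pos rfl]
    simp only [hw, PiLp.inner_apply, RCLike.inner_apply, conj_trivial, PiLp.toLp_apply]
    show ∑ x, v x * v x = 1
    simpa [dotProduct] using hv
  obtain ⟨b, hb⟩ := horth.exists_orthonormalBasis_extension_of_card_eq hcard
  refine ⟨Matrix.of fun i j => b j i, ?_, ?_⟩
  · ext j k
    have h := orthonormal_iff_ite.mp b.orthonormal j k
    simp only [PiLp.inner_apply, RCLike.inner_apply, conj_trivial] at h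
    simp only [Matrix.mul_apply, Matrix.transpose_apply, Matrix.of_apply, Matrix.one_apply]
    simpa [mul_comm] using h
  · intro i
    have := hb k0 rfl
    simp only [Matrix.of_apply, this]
    rfl
private lemma equi_aux_conj_entry {m : ℕ} (M Q : Matrix (Fin m) (Fin m) ℝ) (k l : Fin m) :
    (Qᵀ * M * Q) k l = ∑ i, ∑ j, Q i k * (M i j * Q j l) := by
  rw [Matrix.mul_apply]
  rw [Finset.sum_comm]
  congr 1
  ext j
  rw [Matrix.mul_apply, Finset.sum_mul]
  congr 1
  ext i
  simp [Matrix.transpose_apply, mul_assoc]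

private lemma equi_aux_conj_entry' {m : ℕ} (M Q : Matrix (Fin m) (Fin m) ℝ) (k l : Fin m) :
    (Qᵀ * M * Q) k l = (fun i => Q i k) ⬝ᵥ (M *ᵥ fun i => Q i l) := by
  rw [equi_aux_conj_entry]
  simp [dotProduct, mulVec, Finset.mul_sum]
private lemma equi_aux_key : ∀ (d : ℕ) (M : Matrix (Fin d) (Fin d) ℝ), M.IsHermitian →
    ∃ Q : Matrix (Fin d) (Fin d) ℝ, Qᵀ * Q = 1 ∧
      ∀ k, (Qᵀ * M * Q) k k = M.trace / d := by
  intro d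
  induction d with
  | zero => exact fun M _ => ⟨1, by simp, fun k => k.elim0⟩
  | succ n ih =>
    intro M hM
    obtain ⟨v, hv1, hvt⟩ := equi_aux_exists_unit_avg (Nat.succ_ne_zero n) M hM
    obtain ⟨Q1, hQ1, hQ1v⟩ := equi_aux_exists_orth_extend v hv1 0
    set N := Q1ᵀ * M * Q1 with hNdef
    have hQ1' : Q1 * Q1ᵀ = 1 := mul_eq_one_comm.mp hQ1
    have hMsymm : Mᵀ = M := by
      rw [← Matrix.conjTranspose_eq_transpose_of_trivial]; exact hM
    have hNsymm : Nᵀ = N := by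
      rw [hNdef, Matrix.transpose_mul, Matrix.transpose_mul, Matrix.transpose_transpose,
        hMsymm, mul_assoc]
    have hNtr : N.trace = M.trace := by
      rw [hNdef, Matrix.trace_mul_cycle, hQ1', one_mul]
    have hN00 : N 0 0 = M.trace / (n + 1 : ℕ) := by
      rw [hNdef, equi_aux_conj_entry']
      have hcol : (fun i => Q1 i 0) = v := funext hQ1v
      rw [hcol, hvt]
    set N' : Matrix (Fin n) (Fin n) ℝ := N.submatrix Fin.succ Fin.succ with hN'def
    have hN'symm : N'ᵀ = N' := by
      ext i j
      show N j.succ i.succ = N i.succ j.succ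
      conv_rhs => rw [← hNsymm]
      rfl
    have hN'h : N'.IsHermitian := by
      rw [Matrix.IsHermitian, Matrix.conjTranspose_eq_transpose_of_trivial]; exact hN'symm
    have hN'tr : N'.trace = M.trace - N 0 0 := by
      have h : N.trace = N 0 0 + N'.trace := by
        simp only [Matrix.trace, Matrix.diag, hN'def, Matrix.submatrix_apply]
        rw [Fin.sum_univ_succ]
      rw [← hNtr, h]; ring
    obtain ⟨Q', hQ'o, hQ'd⟩ := ih N' hN'h
    set Q2 : Matrix (Fin (n+1)) (Fin (n+1)) ℝ :=
      Matrix.of (Fin.cons (Fin.cons 1 0) (fun i => Fin.cons 0 (Q' i))) with hQ2def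
    have hQ2e0 : ∀ j : Fin n, Q2 0 j.succ = 0 := by intro j; simp [hQ2def]
    have hQ200 : Q2 0 0 = 1 := by simp [hQ2def]
    have hQ2s0 : ∀ i : Fin n, Q2 i.succ 0 = 0 := by intro i; simp [hQ2def]
    have hQ2ss : ∀ i j : Fin n, Q2 i.succ j.succ = Q' i j := by intro i j; simp [hQ2def]
    have hQ2orth : Q2ᵀ * Q2 = 1 := by
      ext j k
      rw [Matrix.mul_apply]
      simp only [Matrix.transpose_apply]
      rw [Fin.sum_univ_succ]
      induction j using Fin.cases with
      | zero =>
        induction k using Fin.cases with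
        | zero => simp [hQ200, hQ2s0, Matrix.one_apply]
        | succ k' => simp [hQ200, hQ2s0, hQ2e0, Matrix.one_apply, (Fin.succ_ne_zero k').symm]
      | succ j' =>
        induction k using Fin.cases with
        | zero => simp [hQ200, hQ2s0, hQ2e0, Matrix.one_apply, Fin.succ_ne_zero]
        | succ k' =>
          have h := congrFun (congrFun hQ'o j') k'
          rw [Matrix.mul_apply] at h
          simp only [Matrix.transpose_apply] at h
          simp only [hQ2e0, hQ2ss, zero_mul, zero_add]
          rw [h]
          simp [Matrix.one_apply, Fin.succ_inj]
    refine ⟨Q1 * Q2, ?_, ?_⟩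
    · rw [Matrix.transpose_mul, mul_assoc, ← mul_assoc Q1ᵀ, hQ1, one_mul, hQ2orth]
    · intro k
      have hconj : (Q1 * Q2)ᵀ * M * (Q1 * Q2) = Q2ᵀ * N * Q2 := by
        rw [Matrix.transpose_mul, hNdef]
        noncomm_ring
      rw [hconj, equi_aux_conj_entry]
      induction k using Fin.cases with
      | zero =>
        rw [Fin.sum_univ_succ]
        simp only [hQ200, hQ2s0, zero_mul, Finset.sum_const_zero, add_zero, one_mul]
        rw [Fin.sum_univ_succ]
        simp only [hQ200, hQ2s0, mul_zero, mul_one, Finset.sum_const_zero, add_zero]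
        exact hN00
      | succ k' =>
        have hn0 : n ≠ 0 := by rintro rfl; exact k'.elim0
        have hnR : (n : ℝ) ≠ 0 := Nat.cast_ne_zero.mpr hn0
        have hn1R : ((n : ℝ) + 1) ≠ 0 := by positivity
        have hdiag := hQ'd k'
        rw [equi_aux_conj_entry] at hdiag
        have step : (∑ i, ∑ j, Q2 i k'.succ * (N i j * Q2 j k'.succ))
            = ∑ i' : Fin n, ∑ j' : Fin n, Q' i' k' * (N' i' j' * Q' j' k') := by
          rw [Fin.sum_univ_succ]
          simp only [hQ2e0, zero_mul, Finset.sum_const_zero, zero_add]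
          refine Finset.sum_congr rfl fun i' _ => ?_
          rw [Fin.sum_univ_succ]
          simp only [hQ2e0, hQ2ss, mul_zero, zero_add, hN'def, Matrix.submatrix_apply]
        rw [step, hdiag, hN'tr, hN00]
        push_cast
        field_simp
        ring

/-- For any symmetric positive semidefinite matrix `D̃` there is an orthonormal basis
`ψ₁, …, ψ_d` of `ℝ^d` with `⟨ψ_k, D̃ ψ_k⟩ = Tr(D̃)/d` for all `k`. -/
theorem exists_equidistributing_orthonormal_basis {d : ℕ}
    (D : Matrix (Fin d) (Fin d) ℝ) (hD : D.PosSemidef) :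
    ∃ ψ : Fin d → (Fin d → ℝ),
      (∀ j k, ψ j ⬝ᵥ ψ k = if j = k then 1 else 0) ∧
      (∀ k, ψ k ⬝ᵥ (D *ᵥ ψ k) = D.trace / d) := by
  obtain ⟨Q, hQo, hQd⟩ := equi_aux_key d D hD.1
  refine ⟨fun k i => Q i k, ?_, ?_⟩
  · intro j k
    have h := congrFun (congrFun hQo j) k
    rw [Matrix.mul_apply] at h
    simp only [Matrix.transpose_apply] at h
    simpa [dotProduct, Matrix.one_apply] using h
  · intro k
    have h := equi_aux_conj_entry' D Q k k
    rw [hQd] at h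
    exact h.symm
end

section
/- Let D̃ be a symmetric positive semidefinite d×d matrix, let ψ₁, ..., ψ_d be an orthonormal basis of ℝ^d with ⟨ψ_k, D̃ψ_k⟩ = Tr(D̃)/d for all k, and let 0 < λ₁ < ⋯ < λ_d be real numbers. Define Ĵ by Ĵ_{jk} = ((λ_j+λ_k)/(λ_j-λ_k))⟨ψ_j, D̃ψ_k⟩ for j ≠ k and Ĵ_{jj} = 0, set J̃ := Ψ Ĵ Ψᵀ where Ψ = [ψ₁,...,ψ_d], and Q := Ψ diag(λ₁,...,λ_d) Ψᵀ. Then Q is symmetric positive definite and satisfies the Lyapunov equation J̃Q − QJ̃ = −QD̃ − D̃Q + 2(Tr(D̃)/d)Q. -/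
open Matrix

/-- Given a symmetric positive semidefinite `D̃`, an orthonormal basis `ψ` equidistributing
its trace, and `0 < λ₁ < ⋯ < λ_d`, the matrix `Q = Ψ diag(λ) Ψᵀ` is symmetric positive
definite and satisfies the Lyapunov equation
`J̃Q − QJ̃ = −QD̃ − D̃Q + 2 (Tr D̃ / d) Q`, where `J̃ = Ψ Ĵ Ψᵀ` and
`Ĵ_{jk} = ((λ_j+λ_k)/(λ_j−λ_k)) ⟨ψ_j, D̃ψ_k⟩` off the diagonal. -/
theorem lyapunov_equation_for_Q {d : ℕ}
    (D : Matrix (Fin d) (Fin d) ℝ) (hD : D.PosSemidef)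
    (ψ : Fin d → (Fin d → ℝ))
    (hortho : ∀ j k, ψ j ⬝ᵥ ψ k = if j = k then 1 else 0)
    (hequi : ∀ k, ψ k ⬝ᵥ (D *ᵥ ψ k) = D.trace / d)
    (lam : Fin d → ℝ) (hpos : ∀ k, 0 < lam k) (hmono : StrictMono lam) :
    letI Ψ : Matrix (Fin d) (Fin d) ℝ := Matrix.of fun i j => ψ j i
    letI Jhat : Matrix (Fin d) (Fin d) ℝ := Matrix.of fun j k =>
      if j = k then 0 else ((lam j + lam k) / (lam j - lam k)) * (ψ j ⬝ᵥ (D *ᵥ ψ k))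
    letI Jtilde : Matrix (Fin d) (Fin d) ℝ := Ψ * Jhat * Ψᵀ
    letI Q : Matrix (Fin d) (Fin d) ℝ := Ψ * Matrix.diagonal lam * Ψᵀ
    Q.PosDef ∧
      Jtilde * Q - Q * Jtilde = -(Q * D) - D * Q + (2 * (D.trace / d)) • Q := by
  set Ψ : Matrix (Fin d) (Fin d) ℝ := Matrix.of fun i j => ψ j i with hΨdef
  set Jhat : Matrix (Fin d) (Fin d) ℝ := Matrix.of fun j k =>
    if j = k then 0 else ((lam j + lam k) / (lam j - lam k)) * (ψ j ⬝ᵥ (D *ᵥ ψ k)) with hJhatdef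
  set Jtilde : Matrix (Fin d) (Fin d) ℝ := Ψ * Jhat * Ψᵀ with hJtdef
  set Q : Matrix (Fin d) (Fin d) ℝ := Ψ * Matrix.diagonal lam * Ψᵀ with hQdef
  -- Ψ is orthogonal
  have hΨtΨ : Ψᵀ * Ψ = 1 := by
    ext j k
    simp only [mul_apply, transpose_apply, Matrix.one_apply, Ψ, Matrix.of_apply]
    simpa [dotProduct] using hortho j k
  have hΨΨt : Ψ * Ψᵀ = 1 := by
    have := mul_eq_one_comm.mp hΨtΨ
    exact this
  -- M is the matrix of D in the basis ψ
  set M : Matrix (Fin d) (Fin d) ℝ := Ψᵀ * D * Ψ with hM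
  have hMapply : ∀ j k, M j k = ψ j ⬝ᵥ (D *ᵥ ψ k) := by
    intro j k
    simp only [hM, mul_apply, transpose_apply, Ψ, Matrix.of_apply, dotProduct, mulVec,
      dotProduct, Finset.mul_sum]
    rw [Finset.sum_comm]
    exact Finset.sum_congr rfl fun i _ => by rw [Finset.sum_mul]; exact Finset.sum_congr rfl fun l _ => by ring
  have hDM : D = Ψ * M * Ψᵀ := by
    rw [hM]
    calc D = (Ψ * Ψᵀ) * D * (Ψ * Ψᵀ) := by rw [hΨΨt]; simp
    _ = Ψ * (Ψᵀ * D * Ψ) * Ψᵀ := by noncomm_ring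
  set c : ℝ := D.trace / d with hc
  -- key entrywise identity
  have key : Jhat * Matrix.diagonal lam - Matrix.diagonal lam * Jhat =
      -(Matrix.diagonal lam * M) - M * Matrix.diagonal lam +
        (2 * c) • (Matrix.diagonal lam) := by
    ext j k
    simp only [Matrix.sub_apply, Matrix.add_apply, Matrix.neg_apply, Matrix.smul_apply,
      Matrix.mul_diagonal, Matrix.diagonal_mul, Jhat, Matrix.of_apply, smul_eq_mul,
      Matrix.diagonal_apply]
    by_cases h : j = k
    · subst h
      have := hequi j
      rw [hMapply]
      simp [this, hc]
      ring
    · have hne : lam j - lam k ≠ 0 := by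
        intro habs
        exact h (hmono.injective (by linarith))
      rw [if_neg h, if_neg h, hMapply]
      field_simp
      ring
  constructor
  · -- positive definiteness
    refine Matrix.PosDef.of_dotProduct_mulVec_pos ?_ ?_
    · have hΨH : Ψᴴ = Ψᵀ := by ext i j; simp [conjTranspose_apply]
      have hherm : (Matrix.diagonal lam).IsHermitian := Matrix.isHermitian_diagonal lam
      have := Matrix.isHermitian_mul_mul_conjTranspose Ψ hherm
      rwa [hΨH] at this
    · intro x hx
      have hy : Ψᵀ *ᵥ x ≠ 0 := by
        intro habs
        apply hx
        have : Ψ *ᵥ (Ψᵀ *ᵥ x) = x := by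
          rw [Matrix.mulVec_mulVec, hΨΨt, Matrix.one_mulVec]
        rw [habs, Matrix.mulVec_zero] at this
        exact this.symm
      have hdiag : (Matrix.diagonal lam).PosDef := Matrix.posDef_diagonal_iff.mpr hpos
      have := hdiag.dotProduct_mulVec_pos hy
      have heq : star x ⬝ᵥ (Q *ᵥ x) =
          star (Ψᵀ *ᵥ x) ⬝ᵥ (Matrix.diagonal lam *ᵥ (Ψᵀ *ᵥ x)) := by
        show x ⬝ᵥ _ = (Ψᵀ *ᵥ x) ⬝ᵥ _
        rw [show Q *ᵥ x = Ψ *ᵥ (Matrix.diagonal lam *ᵥ (Ψᵀ *ᵥ x)) by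
          simp [hQdef, Matrix.mulVec_mulVec, Matrix.mul_assoc]]
        rw [Matrix.dotProduct_mulVec x Ψ, ← Matrix.mulVec_transpose]
      rw [heq]
      exact this
  · -- Lyapunov equation
    have expand : ∀ A B : Matrix (Fin d) (Fin d) ℝ,
        (Ψ * A * Ψᵀ) * (Ψ * B * Ψᵀ) = Ψ * (A * B) * Ψᵀ := by
      intro A B
      calc (Ψ * A * Ψᵀ) * (Ψ * B * Ψᵀ) = Ψ * A * (Ψᵀ * Ψ) * B * Ψᵀ := by noncomm_ring
      _ = Ψ * (A * B) * Ψᵀ := by rw [hΨtΨ]; noncomm_ring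
    show Jtilde * Q - Q * Jtilde = -(Q * D) - D * Q + (2 * c) • Q
    rw [show Q * D = Ψ * (Matrix.diagonal lam * M) * Ψᵀ by
        rw [show D = Ψ * M * Ψᵀ from hDM]; exact expand _ _,
      show D * Q = Ψ * (M * Matrix.diagonal lam) * Ψᵀ by
        rw [show D = Ψ * M * Ψᵀ from hDM]; exact expand _ _]
    show (Ψ * Jhat * Ψᵀ) * (Ψ * Matrix.diagonal lam * Ψᵀ) -
        (Ψ * Matrix.diagonal lam * Ψᵀ) * (Ψ * Jhat * Ψᵀ) = _
    rw [expand, expand]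
    calc Ψ * (Jhat * Matrix.diagonal lam) * Ψᵀ - Ψ * (Matrix.diagonal lam * Jhat) * Ψᵀ
        = Ψ * (Jhat * Matrix.diagonal lam - Matrix.diagonal lam * Jhat) * Ψᵀ := by
          noncomm_ring
      _ = Ψ * (-(Matrix.diagonal lam * M) - M * Matrix.diagonal lam +
            (2 * c) • Matrix.diagonal lam) * Ψᵀ := by rw [key]
      _ = _ := by
          simp only [Matrix.mul_add, Matrix.add_mul, Matrix.mul_sub, Matrix.sub_mul,
            Matrix.mul_neg, Matrix.neg_mul, Matrix.mul_smul, Matrix.smul_mul]; rfl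
end

section
/- Let c > 1, d ≥ 2, λ_k := (d−1)/(c²−1) + (k−1) for k = 1,...,d, and let Ĵ be the antisymmetric d×d matrix with entries Ĵ_{jk} = ((λ_j+λ_k)/(λ_j−λ_k))·λ·(1/d)·d = λ(λ_j+λ_k)/(λ_j−λ_k)·(α_j α_k d), where α_k² = 1/d for all k and λ > 0. Then ‖Ĵ‖_F ≤ λ · (2π/√3) · (c²/(c²−1)) · √d · (d−1). -/
open Matrix

/-- The Frobenius norm of a real square matrix, `‖A‖_F = √(Tr(AᵀA))`. -/
noncomputable def frobNorm {d : ℕ} (A : Matrix (Fin d) (Fin d) ℝ) : ℝ :=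
  Real.sqrt ((Aᵀ * A).trace)

open Real in
lemma hasSum_nat_inv_sq : HasSum (fun n : ℕ => 1 / (((n : ℤ)) : ℝ) ^ 2) (π ^ 2 / 6) := by
  simpa using hasSum_zeta_two

open Real in
lemma hasSum_negSucc_inv_sq :
    HasSum (fun n : ℕ => 1 / (((-(n + 1) : ℤ)) : ℝ) ^ 2) (π ^ 2 / 6) := by
  have h := (hasSum_nat_add_iff' (f := fun n : ℕ => (1 : ℝ) / (n : ℝ) ^ 2) 1).2 hasSum_zeta_two
  norm_num at h
  have heq : (fun n : ℕ => 1 / (((-(n + 1) : ℤ)) : ℝ) ^ 2)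
      = (fun n : ℕ => (1 : ℝ) / ((n : ℝ) + 1) ^ 2) := by
    funext n; push_cast; ring
  rw [heq]
  convert h using 2 with n
  · rfl
  ring

open Real in
lemma hasSum_int_inv_sq : HasSum (fun z : ℤ => 1 / (z : ℝ) ^ 2) (π ^ 2 / 3) := by
  have h3 := HasSum.of_nat_of_neg_add_one (f := fun z : ℤ => 1 / (z : ℝ) ^ 2)
    hasSum_nat_inv_sq hasSum_negSucc_inv_sq
  rw [show π ^ 2 / 3 = π ^ 2 / 6 + π ^ 2 / 6 by ring]
  exact h3

/-- Row sum bound: for fixed `j`, `∑_{k ≠ j} 1/((k:ℝ)-(j:ℝ))² ≤ π²/3`. -/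
lemma row_sum_bound {d : ℕ} (j : Fin d) :
    ∑ k ∈ Finset.univ.erase j, 1 / (((k : ℕ) : ℝ) - ((j : ℕ) : ℝ)) ^ 2 ≤ Real.pi ^ 2 / 3 := by
  have key : ∀ k : Fin d, 1 / (((k : ℕ) : ℝ) - ((j : ℕ) : ℝ)) ^ 2
      = 1 / ((((k : ℤ) - (j : ℤ)) : ℤ) : ℝ) ^ 2 := by
    intro k; push_cast; ring_nf
  calc ∑ k ∈ Finset.univ.erase j, 1 / (((k : ℕ) : ℝ) - ((j : ℕ) : ℝ)) ^ 2
      = ∑ k ∈ Finset.univ.erase j,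
          (fun z : ℤ => 1 / (z : ℝ) ^ 2) ((k : ℤ) - (j : ℤ)) := by
        exact Finset.sum_congr rfl fun k _ => key k
    _ = ∑ z ∈ (Finset.univ.erase j).image (fun k : Fin d => (k : ℤ) - (j : ℤ)),
          (fun z : ℤ => 1 / (z : ℝ) ^ 2) z := by
        rw [Finset.sum_image]
        intro a _ b _ h
        have : (a : ℤ) = (b : ℤ) := by beta_reduce at h; omega
        exact Fin.ext (by exact_mod_cast this)
    _ ≤ Real.pi ^ 2 / 3 := by
        refine sum_le_hasSum _ (fun z _ => ?_) hasSum_int_inv_sq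
        positivity

/-- For `c > 1`, `λ_k = (d−1)/(c²−1) + (k−1)`, `α_k² = 1/d` and `λ > 0`, the antisymmetric
matrix `Ĵ` with `Ĵ_{jk} = ((λ_j+λ_k)/(λ_j−λ_k)) d λ α_j α_k` (off the diagonal) satisfies
`‖Ĵ‖_F ≤ λ (2π/√3) (c²/(c²−1)) √d (d−1)`. -/
theorem frobenius_bound_Jhat {d : ℕ} (hd : 2 ≤ d) (c : ℝ) (hc : 1 < c)
    (lam0 : ℝ) (hlam0 : 0 < lam0) (α : Fin d → ℝ) (hα : ∀ k, α k ^ 2 = 1 / (d : ℝ)) :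
    letI lam : Fin d → ℝ := fun k => ((d : ℝ) - 1) / (c ^ 2 - 1) + (k : ℝ)
    letI Jhat : Matrix (Fin d) (Fin d) ℝ := Matrix.of fun j k =>
      if j = k then 0 else
        ((lam j + lam k) / (lam j - lam k)) * ((d : ℝ) * lam0 * α j * α k)
    frobNorm Jhat ≤
      lam0 * (2 * Real.pi / Real.sqrt 3) * (c ^ 2 / (c ^ 2 - 1)) *
        Real.sqrt d * ((d : ℝ) - 1) := by
  set lam : Fin d → ℝ := fun k => ((d : ℝ) - 1) / (c ^ 2 - 1) + (k : ℝ) with hlam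
  set Jhat : Matrix (Fin d) (Fin d) ℝ := Matrix.of fun j k =>
      if j = k then 0 else
        ((lam j + lam k) / (lam j - lam k)) * ((d : ℝ) * lam0 * α j * α k) with hJ
  show frobNorm Jhat ≤ _
  have hc2 : (0 : ℝ) < c ^ 2 - 1 := by nlinarith
  have hd1 : (1 : ℝ) ≤ (d : ℝ) - 1 := by
    have : (2 : ℝ) ≤ (d : ℝ) := by exact_mod_cast hd
    linarith
  have hdpos : (0 : ℝ) < d := by linarith
  set M : ℝ := ((d : ℝ) - 1) * c ^ 2 / (c ^ 2 - 1) with hM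
  have hMpos : 0 < M := by positivity
  set R : ℝ := lam0 * (2 * Real.pi / Real.sqrt 3) * (c ^ 2 / (c ^ 2 - 1)) *
        Real.sqrt d * ((d : ℝ) - 1) with hR
  have hpi := Real.pi_pos
  have h3pos : (0 : ℝ) < Real.sqrt 3 := Real.sqrt_pos.2 (by norm_num)
  have hsd : (0 : ℝ) ≤ Real.sqrt d := Real.sqrt_nonneg _
  have hRnn : 0 ≤ R := by positivity
  have htr : (Jhatᵀ * Jhat).trace ≤ R ^ 2 := by
    have htr_eq : (Jhatᵀ * Jhat).trace = ∑ j : Fin d, ∑ k : Fin d, (Jhat k j) ^ 2 := by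
      simp [Matrix.trace, Matrix.mul_apply, Matrix.diag, pow_two]
    rw [htr_eq]
    have hentry : ∀ j k : Fin d, k ≠ j → (Jhat k j) ^ 2 ≤
        lam0 ^ 2 * (4 * M ^ 2) * (1 / (((k : ℕ) : ℝ) - ((j : ℕ) : ℝ)) ^ 2) := by
      intro j k hkj
      have hJkj : Jhat k j = ((lam k + lam j) / (lam k - lam j)) *
          ((d : ℝ) * lam0 * α k * α j) := by
        rw [hJ]; simp [hkj]
      have hsub : lam k - lam j = ((k : ℕ) : ℝ) - ((j : ℕ) : ℝ) := by
        rw [hlam]; ring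
      have hne : (((k : ℕ) : ℝ) - ((j : ℕ) : ℝ)) ≠ 0 := by
        have hne' : ((k : ℕ) : ℝ) ≠ ((j : ℕ) : ℝ) := by
          intro h
          exact hkj (Fin.ext (by exact_mod_cast h))
        intro h; apply hne'; linarith
      have hdne : (d : ℝ) ≠ 0 := ne_of_gt hdpos
      have hsq : (Jhat k j) ^ 2 = (lam k + lam j) ^ 2
          / (((k : ℕ) : ℝ) - ((j : ℕ) : ℝ)) ^ 2 * lam0 ^ 2 := by
        rw [hJkj, hsub]
        have expand : (((lam k + lam j) / (((k : ℕ) : ℝ) - ((j : ℕ) : ℝ))) *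
            ((d : ℝ) * lam0 * α k * α j)) ^ 2
            = (lam k + lam j) ^ 2 / (((k : ℕ) : ℝ) - ((j : ℕ) : ℝ)) ^ 2 *
              ((d : ℝ) ^ 2 * lam0 ^ 2 * (α k ^ 2) * (α j ^ 2)) := by
          field_simp
        rw [expand, hα k, hα j]
        field_simp
      rw [hsq]
      have hbound : (lam k + lam j) ^ 2 ≤ 4 * M ^ 2 := by
        have hknn : (0 : ℝ) ≤ ((k : ℕ) : ℝ) := Nat.cast_nonneg _
        have hjnn : (0 : ℝ) ≤ ((j : ℕ) : ℝ) := Nat.cast_nonneg _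
        have hkle : ((k : ℕ) : ℝ) ≤ (d : ℝ) - 1 := by
          have h' : ((k : ℕ) : ℝ) + 1 ≤ (d : ℝ) := by exact_mod_cast k.isLt
          linarith
        have hjle : ((j : ℕ) : ℝ) ≤ (d : ℝ) - 1 := by
          have h' : ((j : ℕ) : ℝ) + 1 ≤ (d : ℝ) := by exact_mod_cast j.isLt
          linarith
        have hann : 0 ≤ ((d : ℝ) - 1) / (c ^ 2 - 1) := by positivity
        have hsum_nn : 0 ≤ lam k + lam j := by
          rw [hlam]; dsimp only; positivity
        have hMeq : M = ((d : ℝ) - 1) / (c ^ 2 - 1) + ((d : ℝ) - 1) := by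
          rw [hM]; field_simp; ring
        have hsum_le : lam k + lam j ≤ 2 * M := by
          rw [hlam, hMeq]; dsimp only; linarith
        nlinarith
      have hfrac : (0 : ℝ) ≤ 1 / (((k : ℕ) : ℝ) - ((j : ℕ) : ℝ)) ^ 2 := by positivity
      calc (lam k + lam j) ^ 2 / (((k : ℕ) : ℝ) - ((j : ℕ) : ℝ)) ^ 2 * lam0 ^ 2
          = (lam k + lam j) ^ 2 * (1 / (((k : ℕ) : ℝ) - ((j : ℕ) : ℝ)) ^ 2) * lam0 ^ 2 := by
            ring
        _ ≤ 4 * M ^ 2 * (1 / (((k : ℕ) : ℝ) - ((j : ℕ) : ℝ)) ^ 2) * lam0 ^ 2 := by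
            apply mul_le_mul_of_nonneg_right _ (sq_nonneg lam0)
            exact mul_le_mul_of_nonneg_right hbound hfrac
        _ = lam0 ^ 2 * (4 * M ^ 2) * (1 / (((k : ℕ) : ℝ) - ((j : ℕ) : ℝ)) ^ 2) := by ring
    have hcol : ∀ j : Fin d, ∑ k : Fin d, (Jhat k j) ^ 2 ≤
        lam0 ^ 2 * (4 * M ^ 2) * (Real.pi ^ 2 / 3) := by
      intro j
      have hdiag : Jhat j j = 0 := by rw [hJ]; simp
      calc ∑ k : Fin d, (Jhat k j) ^ 2
          = ∑ k ∈ Finset.univ.erase j, (Jhat k j) ^ 2 := by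
            rw [Finset.sum_erase _ (by rw [hdiag]; norm_num)]
        _ ≤ ∑ k ∈ Finset.univ.erase j,
              lam0 ^ 2 * (4 * M ^ 2) * (1 / (((k : ℕ) : ℝ) - ((j : ℕ) : ℝ)) ^ 2) := by
            refine Finset.sum_le_sum fun k hk => ?_
            exact hentry j k (Finset.mem_erase.1 hk).1
        _ = lam0 ^ 2 * (4 * M ^ 2) *
              ∑ k ∈ Finset.univ.erase j, 1 / (((k : ℕ) : ℝ) - ((j : ℕ) : ℝ)) ^ 2 := by
            rw [Finset.mul_sum]
        _ ≤ lam0 ^ 2 * (4 * M ^ 2) * (Real.pi ^ 2 / 3) := by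
            apply mul_le_mul_of_nonneg_left (row_sum_bound j) (by positivity)
    have hsum : ∑ j : Fin d, ∑ k : Fin d, (Jhat k j) ^ 2 ≤
        (d : ℝ) * (lam0 ^ 2 * (4 * M ^ 2) * (Real.pi ^ 2 / 3)) := by
      calc ∑ j : Fin d, ∑ k : Fin d, (Jhat k j) ^ 2
          ≤ ∑ _j : Fin d, lam0 ^ 2 * (4 * M ^ 2) * (Real.pi ^ 2 / 3) :=
            Finset.sum_le_sum fun j _ => hcol j
        _ = (d : ℝ) * (lam0 ^ 2 * (4 * M ^ 2) * (Real.pi ^ 2 / 3)) := by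
            simp [Finset.card_univ, mul_comm]
    refine hsum.trans (le_of_eq ?_)
    have e1 : (2 * Real.pi / Real.sqrt 3) ^ 2 = 4 * Real.pi ^ 2 / 3 := by
      rw [div_pow, Real.sq_sqrt (by norm_num : (0:ℝ) ≤ 3)]
      ring
    have e2 : Real.sqrt d ^ 2 = (d : ℝ) := Real.sq_sqrt hdpos.le
    have hRsq : R ^ 2 = lam0 ^ 2 * ((2 * Real.pi / Real.sqrt 3) ^ 2) *
        ((c ^ 2 / (c ^ 2 - 1)) ^ 2) * (Real.sqrt d ^ 2) * (((d : ℝ) - 1) ^ 2) := by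
      rw [hR]; ring
    rw [hRsq, e1, e2, hM]
    field_simp
  have hfin := Real.sqrt_le_sqrt htr
  rw [Real.sqrt_sq hRnn] at hfin
  exact hfin
end

section
/- Let μ > 1, c := √((μ+1)/(μ−1)), and C̃ = [[2, μ], [−μ, 0]]. Then ‖e^{−C̃t}‖ ≤ c·e^{−t} for all t ≥ 0, where ‖·‖ is the spectral norm. -/
set_option maxHeartbeats 1000000

open Matrix
open scoped Matrix.Norms.L2Operator

/-- A 2x2 PSD-type quadratic form is nonneg. -/
private lemma quad_nonneg (p q r x y : ℝ) (hp : 0 ≤ p) (hr : 0 ≤ r) (hd : q^2 ≤ p*r) :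
    0 ≤ p*x^2 - 2*q*x*y + r*y^2 := by
  rcases eq_or_lt_of_le hp with h0 | hppos
  · have hq : q = 0 := by nlinarith [sq_nonneg q]
    rw [← h0, hq]
    have := mul_nonneg hr (sq_nonneg y)
    nlinarith [this]
  · have h1 : 0 ≤ (p*x - q*y)^2 + (p*r - q^2)*y^2 :=
      add_nonneg (sq_nonneg _) (mul_nonneg (by linarith) (sq_nonneg y))
    nlinarith [h1]

private lemma opNorm_le_of_sq (A : Matrix (Fin 2) (Fin 2) ℝ) (K : ℝ) (hK : 0 ≤ K)
    (h : ∀ x y : ℝ, (A 0 0 * x + A 0 1 * y)^2 + (A 1 0 * x + A 1 1 * y)^2 ≤ K^2 * (x^2 + y^2)) :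
    ‖A‖ ≤ K := by
  rw [Matrix.l2_opNorm_def]
  refine ContinuousLinearMap.opNorm_le_bound _ hK fun x => ?_
  have hv : ‖(Matrix.toEuclideanLin.trans LinearMap.toContinuousLinearMap A) x‖^2
      ≤ (K * ‖x‖)^2 := by
    have hx : ‖x‖^2 = (x 0)^2 + (x 1)^2 := by
      rw [EuclideanSpace.norm_eq, Real.sq_sqrt (by positivity)]
      simp [Fin.sum_univ_two, sq_abs]
    have hAx : ‖(Matrix.toEuclideanLin.trans LinearMap.toContinuousLinearMap A) x‖^2
        = (A 0 0 * x 0 + A 0 1 * x 1)^2 + (A 1 0 * x 0 + A 1 1 * x 1)^2 := by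
      rw [EuclideanSpace.norm_eq, Real.sq_sqrt (by positivity)]
      simp [Fin.sum_univ_two, sq_abs, Matrix.toEuclideanLin_apply, Matrix.mulVec,
        dotProduct]
    rw [hAx, mul_pow, hx]
    exact h (x 0) (x 1)
  have := Real.sqrt_le_sqrt hv
  rwa [Real.sqrt_sq (norm_nonneg _), Real.sqrt_sq (by positivity)] at this

private lemma exp_formula (μ : ℝ) (hμ : 1 < μ) (t : ℝ) :
    NormedSpace.exp (-(t • (!![2, μ; -μ, 0] : Matrix (Fin 2) (Fin 2) ℝ))) =
      (Real.exp (-t) * Real.cos (t * Real.sqrt (μ^2-1))) • (1 : Matrix (Fin 2) (Fin 2) ℝ)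
      + (-(Real.exp (-t) * Real.sin (t * Real.sqrt (μ^2-1))) / Real.sqrt (μ^2-1)) •
          (!![1, μ; -μ, -1] : Matrix (Fin 2) (Fin 2) ℝ) := by
  set ω := Real.sqrt (μ^2 - 1) with hωdef
  have hω2 : ω^2 = μ^2 - 1 := Real.sq_sqrt (by nlinarith)
  have hωpos : 0 < ω := Real.sqrt_pos.mpr (by nlinarith)
  set N : Matrix (Fin 2) (Fin 2) ℝ := !![1, μ; -μ, -1] with hN
  have hJ : (ω⁻¹ • N) * (ω⁻¹ • N) = -1 := by
    rw [smul_mul_smul_comm]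
    have hNN : N * N = (1 - μ^2) • (1 : Matrix (Fin 2) (Fin 2) ℝ) := by
      ext i j
      fin_cases i <;> fin_cases j <;>
        simp [hN, Matrix.mul_apply, Fin.sum_univ_two, Matrix.one_apply] <;> ring
    rw [hNN, smul_smul]
    have : ω⁻¹ * ω⁻¹ * (1 - μ^2) = -1 := by
      field_simp
      nlinarith
    rw [this, neg_smul, one_smul]
  set φ : ℂ →ₐ[ℝ] Matrix (Fin 2) (Fin 2) ℝ := Complex.liftAux (ω⁻¹ • N) hJ with hφ
  have hφcont : Continuous φ := φ.toLinearMap.continuous_of_finiteDimensional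
  have harg : -(t • (!![2, μ; -μ, 0] : Matrix (Fin 2) (Fin 2) ℝ)) =
      φ ((-t : ℝ) + (-(t*ω) : ℝ) * Complex.I) := by
    rw [hφ, Complex.liftAux_apply]
    simp only [Complex.add_re, Complex.ofReal_re, Complex.mul_re, Complex.I_re, Complex.I_im,
      Complex.ofReal_im, Complex.add_im, Complex.mul_im]
    ring_nf
    ext i j
    fin_cases i <;> fin_cases j <;>
      simp [hN, Matrix.algebraMap_matrix_apply, Matrix.one_apply, Matrix.smul_apply] <;>
      field_simp <;> ring
  rw [harg, ← NormedSpace.map_exp φ hφcont]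
  have hexp : NormedSpace.exp ((-t : ℝ) + (-(t*ω) : ℝ) * Complex.I)
      = Complex.exp ((-t : ℝ) + (-(t*ω) : ℝ) * Complex.I) := by
    rw [Complex.exp_eq_exp_ℂ]
  rw [hexp, Complex.exp_add]
  have hz : Complex.exp ((-t : ℝ) : ℂ) * Complex.exp ((-(t*ω) : ℝ) * Complex.I)
      = ((Real.exp (-t) * Real.cos (t*ω) : ℝ) : ℂ)
        + ((-(Real.exp (-t) * Real.sin (t*ω)) : ℝ) : ℂ) * Complex.I := by
    rw [Complex.exp_mul_I, ← Complex.ofReal_exp, ← Complex.ofReal_cos, ← Complex.ofReal_sin]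
    rw [Real.cos_neg, Real.sin_neg]
    push_cast
    ring
  rw [hz, hφ, Complex.liftAux_apply]
  simp only [Complex.add_re, Complex.ofReal_re, Complex.mul_re, Complex.I_re, Complex.I_im,
    Complex.ofReal_im, Complex.add_im, Complex.mul_im]
  rw [Algebra.algebraMap_eq_smul_one, smul_smul]
  ring_nf

/-- For `μ > 1`, `c = √((μ+1)/(μ−1))` and `C̃ = [[2, μ], [−μ, 0]]`, the spectral norm of
the matrix exponential satisfies `‖e^{−C̃t}‖ ≤ c e^{−t}` for all `t ≥ 0`. -/
theorem sharp_decay_2d (μ : ℝ) (hμ : 1 < μ) :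
    letI C : Matrix (Fin 2) (Fin 2) ℝ := !![2, μ; -μ, 0]
    letI c : ℝ := Real.sqrt ((μ + 1) / (μ - 1))
    ∀ t : ℝ, 0 ≤ t → ‖NormedSpace.exp (-(t • C))‖ ≤ c * Real.exp (-t) := by
  intro t _
  show ‖NormedSpace.exp (-(t • (!![2, μ; -μ, 0] : Matrix (Fin 2) (Fin 2) ℝ)))‖
      ≤ Real.sqrt ((μ + 1) / (μ - 1)) * Real.exp (-t)
  set c : ℝ := Real.sqrt ((μ + 1) / (μ - 1)) with hcdef
  set ω := Real.sqrt (μ^2 - 1) with hωdef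
  have hω2 : ω^2 = μ^2 - 1 := Real.sq_sqrt (by nlinarith)
  have hωpos : 0 < ω := Real.sqrt_pos.mpr (by nlinarith)
  have hc2 : c^2 = (μ + 1) / (μ - 1) :=
    Real.sq_sqrt (div_nonneg (by linarith) (by linarith))
  have hcpos : 0 ≤ c := Real.sqrt_nonneg _
  set e : ℝ := Real.exp (-t) with hedef
  have hepos : 0 < e := Real.exp_pos _
  set cθ : ℝ := Real.cos (t * ω) with hcθdef
  set sn : ℝ := Real.sin (t * ω) with hsndef
  set s : ℝ := sn / ω with hsdef
  have hsω : s * ω = sn := div_mul_cancel₀ _ (ne_of_gt hωpos)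
  have hpyth : cθ^2 + sn^2 = 1 := by
    rw [hcθdef, hsndef]; exact Real.cos_sq_add_sin_sq _
  clear_value c ω e cθ sn s
  have hcs : cθ^2 = 1 - s^2*(μ^2-1) := by
    have : s^2 * ω^2 = sn^2 := by rw [← mul_pow, hsω]
    nlinarith [this]
  have hs2 : s^2*(μ^2-1) ≤ 1 := by nlinarith [sq_nonneg cθ]
  set K : ℝ := c^2 - 1 with hKdef
  clear_value K
  have hcc : c^2*(μ-1) = μ+1 := by
    rw [hc2, div_mul_cancel₀ _ (by linarith : μ - (1:ℝ) ≠ 0)]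
  have hKμ : K*(μ-1) = 2 := by
    rw [hKdef]; linear_combination hcc
  have hsum : 0 ≤ K - 2*s^2 := by nlinarith [hKμ, hs2, sq_nonneg s]
  have key2 : 0 ≤ K^2 - 4*K*s^2 - 4*s^2 := by
    nlinarith [hKμ, hs2, sq_nonneg (K*(μ-1) - 2), mul_pos (sub_pos.2 hμ) (sub_pos.2 hμ)]
  have key : (K - 2*s^2)^2 - 4*cθ^2*s^2 - 4*μ^2*s^4 = K^2 - 4*K*s^2 - 4*s^2 := by
    linear_combination (-4*s^2) * hcs
  have hd : (2*μ*s^2)^2 ≤ (K - 2*s^2 + 2*cθ*s) * (K - 2*s^2 - 2*cθ*s) := by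
    nlinarith [key, key2, sq_nonneg s]
  have habs : |2*cθ*s| ≤ K - 2*s^2 := by
    have h1 : (2*cθ*s)^2 ≤ (K - 2*s^2)^2 := by linarith [key, key2, sq_nonneg (μ*s^2)]
    have h2 := Real.sqrt_le_sqrt h1
    rwa [Real.sqrt_sq_eq_abs, Real.sqrt_sq_eq_abs, abs_of_nonneg hsum] at h2
  have hp : 0 ≤ K - 2*s^2 + 2*cθ*s := by
    have := neg_abs_le (2*cθ*s); linarith
  have hr : 0 ≤ K - 2*s^2 - 2*cθ*s := by
    have := le_abs_self (2*cθ*s); linarith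
  -- the explicit matrix
  rw [exp_formula μ hμ t]
  rw [← hωdef, ← hedef, ← hcθdef, ← hsndef]
  have hE : (e * cθ) • (1 : Matrix (Fin 2) (Fin 2) ℝ)
      + (-(e * sn) / ω) • (!![1, μ; -μ, -1] : Matrix (Fin 2) (Fin 2) ℝ)
      = !![e*(cθ - s), -(e*s*μ); e*s*μ, e*(cθ + s)] := by
    ext i j
    fin_cases i <;> fin_cases j <;>
      simp [Matrix.one_apply, Matrix.smul_apply, hsdef] <;> field_simp <;> ring
  rw [hE]
  refine opNorm_le_of_sq _ _ (mul_nonneg hcpos hepos.le) fun x y => ?_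
  have hQ : 0 ≤ (K - 2*s^2 + 2*cθ*s)*x^2 - 2*(2*μ*s^2)*x*y + (K - 2*s^2 - 2*cθ*s)*y^2 :=
    quad_nonneg _ _ _ x y hp hr hd
  have hiden : (c * e)^2 * (x^2 + y^2)
      - ((e*(cθ - s) * x + (-(e*s*μ)) * y)^2 + (e*s*μ * x + e*(cθ + s) * y)^2)
      = e^2 * ((K - 2*s^2 + 2*cθ*s)*x^2 - 2*(2*μ*s^2)*x*y + (K - 2*s^2 - 2*cθ*s)*y^2)
        + e^2 * (x^2 + y^2) * (1 - cθ^2 - s^2*(μ^2-1)) := by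
    rw [hKdef]; ring
  have hzero : 1 - cθ^2 - s^2*(μ^2-1) = 0 := by linarith [hcs]
  have hfin : 0 ≤ (c * e)^2 * (x^2 + y^2)
      - ((e*(cθ - s) * x + (-(e*s*μ)) * y)^2 + (e*s*μ * x + e*(cθ + s) * y)^2) := by
    rw [hiden, hzero, mul_zero, add_zero]
    exact mul_nonneg (sq_nonneg e) hQ
  have hgoal : ((!![e*(cθ - s), -(e*s*μ); e*s*μ, e*(cθ + s)] : Matrix (Fin 2) (Fin 2) ℝ) 0 0 * x
        + (!![e*(cθ - s), -(e*s*μ); e*s*μ, e*(cθ + s)] : Matrix (Fin 2) (Fin 2) ℝ) 0 1 * y)^2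
      + ((!![e*(cθ - s), -(e*s*μ); e*s*μ, e*(cθ + s)] : Matrix (Fin 2) (Fin 2) ℝ) 1 0 * x
        + (!![e*(cθ - s), -(e*s*μ); e*s*μ, e*(cθ + s)] : Matrix (Fin 2) (Fin 2) ℝ) 1 1 * y)^2
      = (e*(cθ - s) * x + (-(e*s*μ)) * y)^2 + (e*s*μ * x + e*(cθ + s) * y)^2 := by
    simp
  rw [hgoal]
  linarith [hfin]
end

section
/- Let A be a real 2×2 positive stable diagonalizable matrix with both eigenvalues having the same real part ρ > 0, and let v₁, v₂ ∈ ℂ² be corresponding eigenvectors. Set α := |⟨v₁/‖v₁‖, v₂/‖v₂‖⟩|. If α < 1, then ‖e^{−At}‖ ≤ √((1+α)/(1−α))·e^{−ρt} for all t ≥ 0. -/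
open Matrix
open scoped Matrix.Norms.L2Operator ComplexInnerProductSpace

lemma clm_exp_eigen {E : Type*} [NormedAddCommGroup E] [NormedSpace ℂ E] [CompleteSpace E]
    (T : E →L[ℂ] E) (v : E) (c : ℂ) (h : T v = c • v) :
    NormedSpace.exp T v = Complex.exp c • v := by
  have hpow : ∀ n : ℕ, (T ^ n) v = c ^ n • v := by
    intro n
    induction n with
    | zero => simp
    | succ n ih =>
      rw [pow_succ', ContinuousLinearMap.mul_apply, ih, _root_.map_smul, h, smul_smul, ← pow_succ]
  have hs : Summable fun n : ℕ => ((Nat.factorial n : ℂ))⁻¹ • T ^ n :=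
    NormedSpace.expSeries_summable' T
  have hs' : Summable fun n : ℕ => ((Nat.factorial n : ℂ))⁻¹ • c ^ n :=
    NormedSpace.expSeries_summable' (𝕂 := ℂ) (𝔸 := ℂ) c
  have h1 : NormedSpace.exp T v = ∑' n : ℕ, (((Nat.factorial n : ℂ))⁻¹ • T ^ n) v := by
    rw [NormedSpace.exp_eq_tsum ℂ]
    exact ((ContinuousLinearMap.apply ℂ E v).map_tsum hs)
  rw [h1]
  have h2 : ∀ n : ℕ, (((Nat.factorial n : ℂ))⁻¹ • T ^ n) v
      = (((Nat.factorial n : ℂ))⁻¹ • c ^ n) • v := by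
    intro n
    rw [ContinuousLinearMap.smul_apply, hpow, smul_smul, smul_eq_mul]
  simp_rw [h2]
  rw [hs'.tsum_smul_const, Complex.exp_eq_exp_ℂ, NormedSpace.exp_eq_tsum ℂ]

lemma gram_bounds {E : Type*} [NormedAddCommGroup E] [InnerProductSpace ℂ E]
    (x y : E) (a b : ℂ) (α : ℝ) (hα0 : 0 ≤ α)
    (h : ‖(⟪x, y⟫ : ℂ)‖ ≤ α * (‖x‖ * ‖y‖)) :
    (1 - α) * ((‖a‖ * ‖x‖) ^ 2 + (‖b‖ * ‖y‖) ^ 2) ≤ ‖a • x + b • y‖ ^ 2 ∧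
    ‖a • x + b • y‖ ^ 2 ≤ (1 + α) * ((‖a‖ * ‖x‖) ^ 2 + (‖b‖ * ‖y‖) ^ 2) := by
  have hexp : ‖a • x + b • y‖ ^ 2
      = ‖a‖ ^ 2 * ‖x‖ ^ 2 + 2 * Complex.re ⟪a • x, b • y⟫ + ‖b‖ ^ 2 * ‖y‖ ^ 2 := by
    rw [@norm_add_sq ℂ, norm_smul, norm_smul]
    simp only [RCLike.re_to_complex]
    ring
  have hinner : ⟪a • x, b • y⟫ = (starRingEnd ℂ a) * b * ⟪x, y⟫ := by
    rw [inner_smul_left, inner_smul_right]; ring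
  have hre : |Complex.re ⟪a • x, b • y⟫| ≤ ‖a‖ * ‖b‖ * (α * (‖x‖ * ‖y‖)) := by
    refine le_trans (Complex.abs_re_le_norm _) ?_
    rw [hinner]
    calc ‖(starRingEnd ℂ a) * b * ⟪x, y⟫‖
        = ‖a‖ * ‖b‖ * ‖(⟪x, y⟫ : ℂ)‖ := by
          simp [_root_.map_mul]
      _ ≤ ‖a‖ * ‖b‖ * (α * (‖x‖ * ‖y‖)) := by
          have := mul_nonneg (norm_nonneg a) (norm_nonneg b)
          exact mul_le_mul_of_nonneg_left h this
  rw [abs_le] at hre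
  have hsq := mul_nonneg hα0 (sq_nonneg (‖a‖ * ‖x‖ - ‖b‖ * ‖y‖))
  constructor <;> rw [hexp] <;> nlinarith [hre.1, hre.2, hsq]

lemma l2norm_real_le_complex (B : Matrix (Fin 2) (Fin 2) ℝ) :
    ‖B‖ ≤ ‖B.map Complex.ofReal‖ := by
  rw [Matrix.l2_opNorm_def]
  refine ContinuousLinearMap.opNorm_le_bound _ (norm_nonneg _) fun x => ?_
  set xc : EuclideanSpace ℂ (Fin 2) := WithLp.toLp 2 (fun i => ((x i : ℝ) : ℂ)) with hxc
  have hnx : ‖xc‖ = ‖x‖ := by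
    simp [EuclideanSpace.norm_eq, hxc]
  show ‖(EuclideanSpace.equiv (Fin 2) ℝ).symm (B *ᵥ x)‖ ≤ _
  have hentry : ∀ i, ((B.map Complex.ofReal) *ᵥ xc) i = (((B *ᵥ x) i : ℝ) : ℂ) := by
    intro i
    simp [Matrix.mulVec, dotProduct, Matrix.map_apply, hxc]
  have hnorm_eq : ‖(EuclideanSpace.equiv (Fin 2) ℝ).symm (B *ᵥ x)‖
      = ‖(EuclideanSpace.equiv (Fin 2) ℂ).symm ((B.map Complex.ofReal) *ᵥ xc)‖ := by
    rw [EuclideanSpace.norm_eq, EuclideanSpace.norm_eq]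
    congr 1
    refine Finset.sum_congr rfl fun i _ => ?_
    rw [show ((EuclideanSpace.equiv (Fin 2) ℂ).symm ((B.map Complex.ofReal) *ᵥ xc)) i
        = ((B.map Complex.ofReal) *ᵥ xc) i from rfl, hentry]
    simp
  rw [hnorm_eq, ← hnx]
  exact Matrix.l2_opNorm_mulVec _ xc

lemma map_ofReal_exp (X : Matrix (Fin 2) (Fin 2) ℝ) :
    (NormedSpace.exp X).map Complex.ofReal = NormedSpace.exp (X.map Complex.ofReal) := by
  have hfc : Continuous (Complex.ofRealAm.mapMatrix (m := Fin 2)) :=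
    (Complex.ofRealAm.mapMatrix (m := Fin 2)).toLinearMap.continuous_of_finiteDimensional
  have h1 := NormedSpace.map_exp_of_mem_ball (𝕂 := ℝ) (Complex.ofRealAm.mapMatrix (m := Fin 2)) hfc X
    ((NormedSpace.expSeries_radius_eq_top ℝ (Matrix (Fin 2) (Fin 2) ℝ)).symm ▸ edist_lt_top _ _)
  rw [AlgHom.mapMatrix_apply, AlgHom.mapMatrix_apply, Complex.ofRealAm_coe] at h1
  rw [h1]

/-- For a real `2×2` positive stable diagonalizable matrix `A` whose two (distinct) complex
eigenvalues both have real part `ρ > 0`, with eigenvectors `v₁, v₂` and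
`α = |⟨v₁/‖v₁‖, v₂/‖v₂‖⟩| < 1`, one has `‖e^{−At}‖ ≤ √((1+α)/(1−α)) e^{−ρt}` for `t ≥ 0`. -/
theorem sharp_constant_2d (A : Matrix (Fin 2) (Fin 2) ℝ)
    (τ₁ τ₂ : ℂ) (hτ : τ₁ ≠ τ₂) (ρ : ℝ) (hρ : 0 < ρ)
    (hre₁ : τ₁.re = ρ) (hre₂ : τ₂.re = ρ)
    (v₁ v₂ : EuclideanSpace ℂ (Fin 2)) (hv₁ : v₁ ≠ 0) (hv₂ : v₂ ≠ 0)
    (heig₁ : (A.map Complex.ofReal) *ᵥ v₁ = τ₁ • v₁)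
    (heig₂ : (A.map Complex.ofReal) *ᵥ v₂ = τ₂ • v₂)
    (α : ℝ) (hα : α = ‖⟪v₁, v₂⟫‖ / (‖v₁‖ * ‖v₂‖)) (hα1 : α < 1) :
    ∀ t : ℝ, 0 ≤ t →
      ‖NormedSpace.exp (-(t • A))‖ ≤
        Real.sqrt ((1 + α) / (1 - α)) * Real.exp (-ρ * t) := by
  intro t ht
  set M : Matrix (Fin 2) (Fin 2) ℂ := A.map Complex.ofReal with hM
  have hnv₁ : 0 < ‖v₁‖ := norm_pos_iff.mpr hv₁
  have hnv₂ : 0 < ‖v₂‖ := norm_pos_iff.mpr hv₂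
  have hα0 : 0 ≤ α := by
    rw [hα]; positivity
  have h1mα : 0 < 1 - α := by linarith
  set K : ℝ := Real.sqrt ((1 + α) / (1 - α)) with hK
  have hK0 : 0 ≤ K := Real.sqrt_nonneg _
  have hK2 : K ^ 2 = (1 + α) / (1 - α) := Real.sq_sqrt (by positivity)
  set r : ℝ := Real.exp (-ρ * t) with hr
  have hr0 : 0 < r := Real.exp_pos _
  -- inner product bound
  have hαIP : ‖(⟪v₁, v₂⟫ : ℂ)‖ ≤ α * (‖v₁‖ * ‖v₂‖) := by
    rw [hα, div_mul_cancel₀]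
    positivity
  -- the complexified matrix in the exponential
  set N : Matrix (Fin 2) (Fin 2) ℂ := -(t • M) with hN
  have hmapN : (-(t • A)).map Complex.ofReal = N := by
    ext i j
    simp [hN, hM, Matrix.map_apply]
  -- eigen equations for N
  have hNsmul : N = (-(t : ℂ)) • M := by
    ext i j
    simp [hN, Matrix.map_apply]
  have heigN₁ : N *ᵥ v₁ = (-(t * τ₁) : ℂ) • v₁ := by
    rw [hNsmul, Matrix.smul_mulVec, heig₁, smul_smul]
    rw [show (-(t : ℂ)) * τ₁ = -(t * τ₁) by ring]
  have heigN₂ : N *ᵥ v₂ = (-(t * τ₂) : ℂ) • v₂ := by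
    rw [hNsmul, Matrix.smul_mulVec, heig₂, smul_smul]
    rw [show (-(t : ℂ)) * τ₂ = -(t * τ₂) by ring]
  -- transfer to continuous linear maps
  set Φ := Matrix.toEuclideanCLM (n := Fin 2) (𝕜 := ℂ) with hΦ
  have hiso : Isometry Φ :=
    AddMonoidHomClass.isometry_of_norm Φ (fun x => (Matrix.cstar_norm_def x).symm)
  have hexpΦ : Φ (NormedSpace.exp N) = NormedSpace.exp (Φ N) :=
    NormedSpace.map_exp_of_mem_ball (𝕂 := ℂ) Φ hiso.continuous N
      ((NormedSpace.expSeries_radius_eq_top ℂ (Matrix (Fin 2) (Fin 2) ℂ)).symm ▸ edist_lt_top _ _)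
  have happ : ∀ (X : Matrix (Fin 2) (Fin 2) ℂ) (v : EuclideanSpace ℂ (Fin 2)),
      Φ X v = X *ᵥ v := fun X v => rfl
  set T : EuclideanSpace ℂ (Fin 2) →L[ℂ] EuclideanSpace ℂ (Fin 2) :=
    NormedSpace.exp (Φ N) with hT
  have hTv₁ : T v₁ = Complex.exp (-(t * τ₁)) • v₁ := by
    rw [hT]
    exact clm_exp_eigen (Φ N) v₁ _ (by apply WithLp.ofLp_injective 2; rw [happ, WithLp.ofLp_smul]; exact heigN₁)
  have hTv₂ : T v₂ = Complex.exp (-(t * τ₂)) • v₂ := by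
    rw [hT]
    exact clm_exp_eigen (Φ N) v₂ _ (by apply WithLp.ofLp_injective 2; rw [happ, WithLp.ofLp_smul]; exact heigN₂)
  -- norms of the exponential factors
  have hnexp₁ : ‖Complex.exp (-(t * τ₁))‖ = r := by
    rw [Complex.norm_exp, hr]
    congr 1
    simp [Complex.mul_re, hre₁]
    ring
  have hnexp₂ : ‖Complex.exp (-(t * τ₂))‖ = r := by
    rw [Complex.norm_exp, hr]
    congr 1
    simp [Complex.mul_re, hre₂]
    ring
  -- spanning
  have hdecomp : ∀ x : EuclideanSpace ℂ (Fin 2), ∃ a b : ℂ, a • v₁ + b • v₂ = x := by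
    intro x
    have key : ∀ s u : ℂ, M *ᵥ ((s • v₁ + u • v₂ : EuclideanSpace ℂ (Fin 2)))
        = ((s * τ₁) • v₁ + (u * τ₂) • v₂ : EuclideanSpace ℂ (Fin 2)) := by
      intro s u
      have e2 : M *ᵥ (s • (v₁ : Fin 2 → ℂ) + u • (v₂ : Fin 2 → ℂ))
          = s • (M *ᵥ (v₁ : Fin 2 → ℂ)) + u • (M *ᵥ (v₂ : Fin 2 → ℂ)) := by
        rw [Matrix.mulVec_add, Matrix.mulVec_smul, Matrix.mulVec_smul]
      show M *ᵥ (s • (v₁ : Fin 2 → ℂ) + u • (v₂ : Fin 2 → ℂ))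
          = ((s * τ₁) • v₁ + (u * τ₂) • v₂ : EuclideanSpace ℂ (Fin 2))
      rw [e2]
      show s • (M *ᵥ v₁) + u • (M *ᵥ v₂)
          = ((s * τ₁) • v₁ + (u * τ₂) • v₂ : EuclideanSpace ℂ (Fin 2))
      rw [heig₁, heig₂, smul_smul, smul_smul, WithLp.ofLp_add, WithLp.ofLp_smul, WithLp.ofLp_smul]
    have hli : LinearIndependent ℂ ![v₁, v₂] := by
      rw [LinearIndependent.pair_iff]
      intro s u hsu
      have h1 : (s * τ₁) • v₁ + (u * τ₂) • v₂ = 0 := by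
        have h := congrArg (fun w : EuclideanSpace ℂ (Fin 2) => M *ᵥ w) hsu
        simp only at h
        rw [key] at h
        exact WithLp.ofLp_injective 2 (by simpa using h)
      have h2 : (τ₁ * s) • v₁ + (τ₁ * u) • v₂ = 0 := by
        have h := congrArg (fun w : EuclideanSpace ℂ (Fin 2) => τ₁ • w) hsu
        simpa [smul_add, smul_smul] using h
      have h3 : (u * (τ₂ - τ₁)) • v₂ = 0 := by
        calc (u * (τ₂ - τ₁)) • v₂
            = ((s * τ₁) • v₁ + (u * τ₂) • v₂) - ((τ₁ * s) • v₁ + (τ₁ * u) • v₂) := by module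
          _ = 0 := by rw [h1, h2, sub_zero]
      have hu : u = 0 := by
        rcases smul_eq_zero.mp h3 with h | h
        · rcases mul_eq_zero.mp h with h | h
          · exact h
          · exact absurd (sub_eq_zero.mp h).symm hτ
        · exact absurd h hv₂
      subst hu
      simp only [zero_smul, add_zero] at hsu
      rcases smul_eq_zero.mp hsu with h | h
      · exact ⟨h, rfl⟩
      · exact absurd h hv₁
    have hspan : Submodule.span ℂ (Set.range ![v₁, v₂]) = ⊤ :=
      hli.span_eq_top_of_card_eq_finrank (by simp)
    have hx : x ∈ Submodule.span ℂ ({v₁, v₂} : Set (EuclideanSpace ℂ (Fin 2))) := by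
      have : Set.range ![v₁, v₂] = {v₁, v₂} := by
        simp [Matrix.range_cons, Matrix.range_cons_empty, Set.pair_comm]
      rw [← this, hspan]; trivial
    exact Submodule.mem_span_pair.mp hx
  -- the pointwise operator bound
  have hbound : ∀ x : EuclideanSpace ℂ (Fin 2), ‖T x‖ ≤ (K * r) * ‖x‖ := by
    intro x
    obtain ⟨a, b, hx⟩ := hdecomp x
    have hxlow : (1 - α) * ((‖a‖ * ‖v₁‖) ^ 2 + (‖b‖ * ‖v₂‖) ^ 2) ≤ ‖x‖ ^ 2 := by
      rw [← hx]
      exact (gram_bounds v₁ v₂ a b α hα0 hαIP).1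
    have hTx : T x = (Complex.exp (-(t * τ₁)) * a) • v₁ + (Complex.exp (-(t * τ₂)) * b) • v₂ := by
      rw [← hx, map_add, _root_.map_smul, _root_.map_smul, hTv₁, hTv₂, smul_smul, smul_smul,
        mul_comm a _, mul_comm b _]
    have hupp := (gram_bounds v₁ v₂ (Complex.exp (-(t * τ₁)) * a)
      (Complex.exp (-(t * τ₂)) * b) α hα0 hαIP).2
    rw [norm_mul, norm_mul, hnexp₁, hnexp₂] at hupp
    have hTxupp : ‖T x‖ ^ 2
        ≤ r ^ 2 * ((1 + α) * ((‖a‖ * ‖v₁‖) ^ 2 + (‖b‖ * ‖v₂‖) ^ 2)) := by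
      rw [hTx]
      exact le_of_le_of_eq hupp (by ring)
    have hmul : (1 + α) * r ^ 2 * ((1 - α) * ((‖a‖ * ‖v₁‖) ^ 2 + (‖b‖ * ‖v₂‖) ^ 2))
        ≤ (1 + α) * r ^ 2 * ‖x‖ ^ 2 :=
      mul_le_mul_of_nonneg_left hxlow (by positivity)
    have hsq : ‖T x‖ ^ 2 ≤ ((K * r) * ‖x‖) ^ 2 := by
      have h1 : ((K * r) * ‖x‖) ^ 2 = (1 + α) / (1 - α) * r ^ 2 * ‖x‖ ^ 2 := by
        rw [mul_pow, mul_pow, hK2]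
      rw [h1]
      have h2 : r ^ 2 * ((1 + α) * ((‖a‖ * ‖v₁‖) ^ 2 + (‖b‖ * ‖v₂‖) ^ 2))
          ≤ (1 + α) / (1 - α) * r ^ 2 * ‖x‖ ^ 2 := by
        rw [div_mul_eq_mul_div, div_mul_eq_mul_div, le_div_iff₀ h1mα]
        calc r ^ 2 * ((1 + α) * ((‖a‖ * ‖v₁‖) ^ 2 + (‖b‖ * ‖v₂‖) ^ 2)) * (1 - α)
            = (1 + α) * r ^ 2 * ((1 - α) * ((‖a‖ * ‖v₁‖) ^ 2 + (‖b‖ * ‖v₂‖) ^ 2)) := by ring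
          _ ≤ (1 + α) * r ^ 2 * ‖x‖ ^ 2 := hmul
      exact le_trans hTxupp h2
    have := Real.sqrt_le_sqrt hsq
    rwa [Real.sqrt_sq (norm_nonneg _), Real.sqrt_sq (by positivity)] at this
  -- assemble
  have hTnorm : ‖T‖ ≤ K * r := ContinuousLinearMap.opNorm_le_bound _ (by positivity) hbound
  calc ‖NormedSpace.exp (-(t • A))‖
      ≤ ‖(NormedSpace.exp (-(t • A))).map Complex.ofReal‖ := l2norm_real_le_complex _
    _ = ‖NormedSpace.exp N‖ := by rw [map_ofReal_exp, hmapN]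
    _ = ‖Φ (NormedSpace.exp N)‖ := (Matrix.cstar_norm_def _)
    _ = ‖T‖ := by rw [hexpΦ, hT]
    _ ≤ K * r := hTnorm
end
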